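/- Let n be a natural number and let X and Y be finite sets (Finsets) of vectors in Fin n → ZMod 2. Suppose there exists c ∈ ZMod 2 such that for every x ∈ X and every y ∈ Y the inner product ∑ i, x i * y i equals c. Then X.card * Y.card ≤ 2^n. -/

import Mathlib

noncomputable def stdBilin (n : ℕ) : LinearMap.BilinForm (ZMod 2) (Fin n → ZMod 2) :=
  LinearMap.mk₂ (ZMod 2) (fun x y => ∑ i, x i * y i)
    (by intro x x' y; simp [add_mul, Finset.sum_add_distrib])
    (by intro a x y; simp [Finset.mul_sum, mul_assoc])
    (by intro x y y'; simp [mul_add, Finset.sum_add_distrib])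
    (by intro a x y; simp [Finset.mul_sum, mul_assoc, mul_left_comm])

lemma stdBilin_apply (n : ℕ) (x y : Fin n → ZMod 2) :
    stdBilin n x y = ∑ i, x i * y i := rfl

lemma stdBilin_refl (n : ℕ) : (stdBilin n).IsRefl := by
  intro x y h
  simpa [stdBilin_apply, mul_comm] using h

lemma stdBilin_nondeg (n : ℕ) : (stdBilin n).Nondegenerate := by
  refine (LinearMap.IsRefl.nondegenerate_iff_separatingLeft (stdBilin_refl n)).mpr ?_
  intro x hx
  funext i
  have := hx (Pi.single i 1)
  simpa [stdBilin_apply, Pi.single_apply, Finset.sum_ite_eq', mul_comm] using this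

theorem monochromatic_rectangle_card_le
    (n : ℕ) (X Y : Finset (Fin n → ZMod 2))
    (h : ∃ c : ZMod 2, ∀ x ∈ X, ∀ y ∈ Y, ∑ i, x i * y i = c) :
    X.card * Y.card ≤ 2 ^ n := by
  obtain ⟨c, hc⟩ := h
  rcases X.eq_empty_or_nonempty with rfl | ⟨x0, hx0⟩
  · simp
  set B := stdBilin n with hB
  set U : Submodule (ZMod 2) (Fin n → ZMod 2) := Submodule.span (ZMod 2) (Y : Set _) with hU
  set W : Submodule (ZMod 2) (Fin n → ZMod 2) := B.orthogonal U with hW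
  haveI : Fintype U := Fintype.ofFinite U
  haveI : Fintype W := Fintype.ofFinite W
  have hd : Module.finrank (ZMod 2) U ≤ n := by
    have := Submodule.finrank_le U
    simpa [Module.finrank_fin_fun] using this
  have hcardU : Fintype.card U = 2 ^ Module.finrank (ZMod 2) U := by
    simpa [ZMod.card] using Module.card_eq_pow_finrank (K := ZMod 2) (V := U)
  have hcardW : Fintype.card W = 2 ^ (n - Module.finrank (ZMod 2) U) := by
    rw [Module.card_eq_pow_finrank (K := ZMod 2) (V := W), ZMod.card]
    congr 1
    rw [hW, LinearMap.BilinForm.finrank_orthogonal (stdBilin_nondeg n)]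
    simp [Module.finrank_fin_fun]
  -- Y injects into U
  have hY : Y.card ≤ Fintype.card U := by
    rw [← Fintype.card_coe Y]
    exact Fintype.card_le_of_injective
      (fun y => ⟨y.1, Submodule.subset_span y.2⟩)
      (fun a b hab => Subtype.ext (by simpa using congrArg Subtype.val hab))
  -- X - x0 injects into W
  have hX : X.card ≤ Fintype.card W := by
    rw [← Fintype.card_coe X]
    refine Fintype.card_le_of_injective (fun x => ⟨x.1 - x0, ?_⟩) ?_
    · rw [hW]
      intro u hu
      induction hu using Submodule.span_induction with
      | mem y hy =>
          show B y (x.1 - x0) = 0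
          rw [map_sub]
          have h1 : B y x.1 = c := by
            rw [stdBilin_apply]
            rw [show ∑ i, y i * x.1 i = ∑ i, x.1 i * y i from
              Finset.sum_congr rfl fun i _ => mul_comm _ _]
            exact hc x.1 x.2 y hy
          have h2 : B y x0 = c := by
            rw [stdBilin_apply]
            rw [show ∑ i, y i * x0 i = ∑ i, x0 i * y i from
              Finset.sum_congr rfl fun i _ => mul_comm _ _]
            exact hc x0 hx0 y hy
          rw [h1, h2, sub_self]
      | zero =>
          show B 0 (x.1 - x0) = 0
          simp
      | add u v _ _ hu hv =>
          show B (u + v) (x.1 - x0) = 0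
          rw [map_add, LinearMap.add_apply, hu, hv, add_zero]
      | smul a u _ hu =>
          show B (a • u) (x.1 - x0) = 0
          rw [map_smul, LinearMap.smul_apply, hu, smul_zero]
    · intro a b hab
      have : a.1 - x0 = b.1 - x0 := by simpa using congrArg Subtype.val hab
      exact Subtype.ext (by linear_combination (norm := abel) this)
  calc X.card * Y.card ≤ Fintype.card W * Fintype.card U :=
        Nat.mul_le_mul hX hY
    _ = 2 ^ (n - Module.finrank (ZMod 2) U) * 2 ^ Module.finrank (ZMod 2) U := by
        rw [hcardW, hcardU]
    _ = 2 ^ n := by rw [← pow_add]; congr 1; omega
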